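/- Let n be a positive integer and let G := (ℤ/nℤ × ℤ/nℤ) ⋊_φ ℤ/2ℤ, where the nontrivial element τ of ℤ/2ℤ acts by φ(τ)(a, b) = (b, a). Let H be a subgroup of G containing the element ((0,0), τ). Then for every positive integer m with |H| dividing m and m dividing |G|, there exists a subgroup K of G with H ≤ K ≤ G and |K| = m; that is, {|K| : H ≤ K ≤ G} is exactly the set of multiples of |H| dividing |G|. -/

import Mathlib

/-- The order-2 automorphism of `(ℤ/nℤ)²` (written multiplicatively) swapping
the two coordinates. -/
def swapAut (n : ℕ) : MulAut (Multiplicative (ZMod n × ZMod n)) :=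
  AddEquiv.toMultiplicative
    (AddEquiv.prodComm : ZMod n × ZMod n ≃+ ZMod n × ZMod n)

/-- The action `φ` of `ℤ/2ℤ` on `(ℤ/nℤ)²` in which the nontrivial element `τ` acts by
swapping the two coordinates. -/
def swapHom (n : ℕ) : Multiplicative (ZMod 2) →* MulAut (Multiplicative (ZMod n × ZMod n)) where
  toFun t := if Multiplicative.toAdd t = 0 then 1 else swapAut n
  map_one' := by simp
  map_mul' a b := by
    have key : ∀ x : ZMod 2, x ≠ 0 → x = 1 := by decide
    have hss : swapAut n * swapAut n = 1 := by
      ext x <;> first | rfl | (simp [swapAut, MulAut.mul_apply]; done) | (simp [swapAut, MulAut.mul_apply]; rfl)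
    by_cases ha : Multiplicative.toAdd a = 0 <;> by_cases hb : Multiplicative.toAdd b = 0
    · simp [toAdd_mul, ha, hb]
    · simp [toAdd_mul, ha, hb]
    · simp [toAdd_mul, ha, hb]
    · have h1 : Multiplicative.toAdd a = 1 := key _ ha
      have h2 : Multiplicative.toAdd b = 1 := key _ hb
      have hab : Multiplicative.toAdd (a * b) = 0 := by
        rw [toAdd_mul, h1, h2]; decide
      simp [hab, ha, hb, hss]


section Abelian
variable {M : Type*} [AddCommGroup M] [Finite M]

lemma step_lemma (σ : M ≃+ M) (hσ : ∀ a, σ (σ a) = a) (B₀ : AddSubgroup M)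
    (hinv : ∀ a ∈ B₀, σ a ∈ B₀) (p : ℕ) (hp : p.Prime)
    (hdvd : p * Nat.card B₀ ∣ Nat.card M) :
    ∃ B₁ : AddSubgroup M, B₀ ≤ B₁ ∧ (∀ a ∈ B₁, σ a ∈ B₁) ∧
      Nat.card B₁ = p * Nat.card B₀ := by
  classical
  have hcB₀ : 0 < Nat.card B₀ := Nat.card_pos
  -- p divides the cardinality of the quotient
  have hpQ : p ∣ Nat.card (M ⧸ B₀) := by
    have h1 : Nat.card B₀ * B₀.index = Nat.card M := B₀.card_mul_index
    have h2 : p * Nat.card B₀ ∣ Nat.card B₀ * B₀.index := h1 ▸ hdvd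
    rw [mul_comm p] at h2
    rw [← AddSubgroup.index_eq_card]
    exact (mul_dvd_mul_iff_left hcB₀.ne').mp h2
  -- the induced involution on the quotient
  have hle : B₀ ≤ B₀.comap σ.toAddMonoidHom := fun a ha => hinv a ha
  set σQ : M ⧸ B₀ →+ M ⧸ B₀ := QuotientAddGroup.map B₀ B₀ σ.toAddMonoidHom hle with hσQ
  have hσQ_mk : ∀ a : M, σQ (QuotientAddGroup.mk a) = QuotientAddGroup.mk (σ a) :=
    fun a => rfl
  -- Cauchy in the quotient
  haveI : Fintype (M ⧸ B₀) := Fintype.ofFinite _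
  haveI : Fact p.Prime := ⟨hp⟩
  obtain ⟨y, hy⟩ := exists_prime_addOrderOf_dvd_card (G := M ⧸ B₀) p
    (by rwa [← Nat.card_eq_fintype_card])
  -- find an element v of order p with σQ v = v or σQ v = -v
  have hexists : ∃ v : M ⧸ B₀, addOrderOf v = p ∧ (σQ v = v ∨ σQ v = -v) := by
    by_cases hz : y + σQ y = 0
    · exact ⟨y, hy, Or.inr (by rw [eq_neg_iff_add_eq_zero, add_comm]; exact hz)⟩
    · refine ⟨y + σQ y, ?_, Or.inl ?_⟩
      · have hp_smul : p • (y + σQ y) = 0 := by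
          have : p • y = 0 := by rw [← hy]; exact addOrderOf_nsmul_eq_zero y
          rw [smul_add, this, ← map_nsmul, this, map_zero, add_zero]
        have hdvd' : addOrderOf (y + σQ y) ∣ p := addOrderOf_dvd_of_nsmul_eq_zero hp_smul
        rcases (Nat.dvd_prime hp).mp hdvd' with h1 | h1
        · exact absurd (AddMonoid.addOrderOf_eq_one_iff.mp h1) hz
        · exact h1
      · rw [map_add, add_comm]
        congr 1
        obtain ⟨a, rfl⟩ := QuotientAddGroup.mk_surjective y
        rw [hσQ_mk, hσQ_mk, hσ]
  obtain ⟨v, hv_ord, hv_inv⟩ := hexists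
  obtain ⟨x, rfl⟩ := QuotientAddGroup.mk_surjective v
  have hx_not : x ∉ B₀ := by
    intro hx
    have : (QuotientAddGroup.mk x : M ⧸ B₀) = 0 := (QuotientAddGroup.eq_zero_iff x).mpr hx
    rw [this, addOrderOf_zero] at hv_ord
    exact hp.ne_one hv_ord.symm
  have hpx : p • x ∈ B₀ := by
    rw [← QuotientAddGroup.eq_zero_iff]
    have : (QuotientAddGroup.mk (p • x) : M ⧸ B₀) = p • QuotientAddGroup.mk x := rfl
    rw [this, ← hv_ord]
    exact addOrderOf_nsmul_eq_zero _
  have hsx : σ x - x ∈ B₀ ∨ σ x + x ∈ B₀ := by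
    rcases hv_inv with h | h
    · left
      rw [← QuotientAddGroup.eq_zero_iff]
      have : (QuotientAddGroup.mk (σ x - x) : M ⧸ B₀) =
          σQ (QuotientAddGroup.mk x) - QuotientAddGroup.mk x := by
        rw [hσQ_mk]; rfl
      rw [this, h, sub_self]
    · right
      rw [← QuotientAddGroup.eq_zero_iff]
      have : (QuotientAddGroup.mk (σ x + x) : M ⧸ B₀) =
          σQ (QuotientAddGroup.mk x) + QuotientAddGroup.mk x := by
        rw [hσQ_mk]; rfl
      rw [this, h, neg_add_cancel]
  refine ⟨B₀ ⊔ AddSubgroup.zmultiples x, le_sup_left, ?_, ?_⟩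
  · -- invariance
    intro a ha
    rw [AddSubgroup.mem_sup] at ha ⊢
    obtain ⟨b, hb, z, hz, rfl⟩ := ha
    obtain ⟨k, rfl⟩ := AddSubgroup.mem_zmultiples_iff.mp hz
    rcases hsx with h | h
    · refine ⟨σ b + k • (σ x - x), ?_, k • x, AddSubgroup.zsmul_mem _ (AddSubgroup.mem_zmultiples x) k, ?_⟩
      · exact AddSubgroup.add_mem _ (hinv b hb) (AddSubgroup.zsmul_mem _ h k)
      · rw [map_add, map_zsmul, smul_sub]
        abel
    · refine ⟨σ b + k • (σ x + x), ?_, (-k) • x, AddSubgroup.zsmul_mem _ (AddSubgroup.mem_zmultiples x) (-k), ?_⟩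
      · exact AddSubgroup.add_mem _ (hinv b hb) (AddSubgroup.zsmul_mem _ h k)
      · rw [map_add, map_zsmul, smul_add, neg_smul]
        abel
  · -- cardinality
    have key : ∀ m : ℤ, m • x ∈ B₀ → (p : ℤ) ∣ m := by
      intro m hm
      have h0 : (QuotientAddGroup.mk (m • x) : M ⧸ B₀) = 0 :=
        (QuotientAddGroup.eq_zero_iff _).mpr hm
      have h1 : m • (QuotientAddGroup.mk x : M ⧸ B₀) = 0 := h0
      have h2 := addOrderOf_dvd_iff_zsmul_eq_zero.mpr h1
      rw [hv_ord] at h2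
      exact h2
    set f : B₀ × Fin p → (B₀ ⊔ AddSubgroup.zmultiples x : AddSubgroup M) := fun bk =>
      ⟨(bk.1 : M) + (bk.2 : ℕ) • x, AddSubgroup.mem_sup.mpr
        ⟨bk.1, bk.1.2, (bk.2 : ℕ) • x,
          AddSubgroup.nsmul_mem _ (AddSubgroup.mem_zmultiples x) _, rfl⟩⟩
    have hinj : Function.Injective f := by
      rintro ⟨b, k⟩ ⟨b', k'⟩ hbk
      have heq : (b : M) + (k : ℕ) • x = (b' : M) + (k' : ℕ) • x := congrArg Subtype.val hbk
      have hmem : (((k : ℕ) : ℤ) - ((k' : ℕ) : ℤ)) • x ∈ B₀ := by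
        have hx2 : (((k : ℕ) : ℤ) - ((k' : ℕ) : ℤ)) • x = (b' : M) - (b : M) := by
          have e1 : ((k : ℕ) : ℤ) • x = (k : ℕ) • x := natCast_zsmul x _
          have e2 : ((k' : ℕ) : ℤ) • x = (k' : ℕ) • x := natCast_zsmul x _
          rw [sub_zsmul, e1, e2, ← sub_eq_add_neg, sub_eq_sub_iff_add_eq_add, add_comm]
          exact heq
        rw [hx2]
        exact AddSubgroup.sub_mem _ b'.2 b.2
      have hdvd' := key _ hmem
      have habs : (((k : ℕ) : ℤ) - ((k' : ℕ) : ℤ)) = 0 := by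
        apply Int.eq_zero_of_dvd_of_natAbs_lt_natAbs hdvd'
        have h1 : (k : ℕ) < p := k.2
        have h2 : (k' : ℕ) < p := k'.2
        omega
      have hkk : (k : ℕ) = (k' : ℕ) := by omega
      have hk : k = k' := Fin.ext hkk
      subst hk
      have hb : (b : M) = (b' : M) := by
        have := heq
        simpa using this
      exact Prod.ext (Subtype.ext hb) rfl
    have hsurj : Function.Surjective f := by
      rintro ⟨g, hg⟩
      rw [AddSubgroup.mem_sup] at hg
      obtain ⟨b, hb, z, hz, rfl⟩ := hg
      obtain ⟨m, rfl⟩ := AddSubgroup.mem_zmultiples_iff.mp hz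
      -- reduce m mod p
      have hp0 : (0:ℤ) < (p : ℤ) := by exact_mod_cast hp.pos
      set r := m % (p : ℤ) with hr
      set q := m / (p : ℤ) with hq
      have hm : m = (p : ℤ) * q + r := (Int.mul_ediv_add_emod m p).symm
      have hr0 : 0 ≤ r := Int.emod_nonneg m hp0.ne'
      have hrp : r < (p : ℤ) := Int.emod_lt_of_pos m hp0
      have hb' : b + q • ((p : ℤ) • x) ∈ B₀ := by
        refine AddSubgroup.add_mem _ hb (AddSubgroup.zsmul_mem _ ?_ q)
        have : ((p : ℤ)) • x = p • x := by
          rw [natCast_zsmul]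
        rw [this]; exact hpx
      refine ⟨⟨⟨b + q • ((p : ℤ) • x), hb'⟩, ⟨r.toNat, ?_⟩⟩, ?_⟩
      · have : (r.toNat : ℤ) < (p : ℤ) := by rwa [Int.toNat_of_nonneg hr0]
        exact_mod_cast this
      · apply Subtype.ext
        show (b + q • ((p:ℤ) • x)) + (r.toNat : ℕ) • x = b + m • x
        have h5 : (r.toNat : ℕ) • x = r • x := by
          rw [← natCast_zsmul, Int.toNat_of_nonneg hr0]
        rw [h5, hm]
        have h6 : ((p : ℤ) * q + r) • x = q • ((p:ℤ) • x) + r • x := by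
          rw [add_zsmul, mul_comm, mul_zsmul]
        rw [h6]; abel
    have hcard := Nat.card_eq_of_bijective f ⟨hinj, hsurj⟩
    rw [← hcard, Nat.card_prod, Nat.card_eq_fintype_card (α := Fin p), Fintype.card_fin, mul_comm]



lemma exists_invariant_subgroup (σ : M ≃+ M) (hσ : ∀ a, σ (σ a) = a)
    (t : ℕ) (B₀ : AddSubgroup M) (hinv : ∀ a ∈ B₀, σ a ∈ B₀)
    (hdvd : Nat.card B₀ * t ∣ Nat.card M) :
    ∃ B : AddSubgroup M, B₀ ≤ B ∧ (∀ a ∈ B, σ a ∈ B) ∧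
      Nat.card B = Nat.card B₀ * t := by
  induction t using Nat.strong_induction_on generalizing B₀ with
  | _ t ih =>
    rcases Nat.eq_zero_or_pos t with rfl | ht
    · exfalso
      rw [mul_zero] at hdvd
      have := Nat.eq_zero_of_zero_dvd hdvd
      exact Nat.card_pos.ne' this
    rcases eq_or_lt_of_le (show 1 ≤ t from ht) with h1 | h1
    · exact ⟨B₀, le_rfl, hinv, by rw [← h1]; simp⟩
    · have ht2 : 2 ≤ t := h1
      set p := t.minFac with hpdef
      have hp : p.Prime := Nat.minFac_prime (by omega)
      obtain ⟨t', htt⟩ := t.minFac_dvd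
      have ht'pos : 0 < t' := by
        rcases Nat.eq_zero_or_pos t' with rfl | h
        · omega
        · exact h
      obtain ⟨B₁, hle, hinv₁, hcard₁⟩ := step_lemma σ hσ B₀ hinv p hp
        (dvd_trans ⟨t', by rw [htt]; ring⟩ hdvd)
      have ht'lt : t' < t := by
        have := hp.two_le
        calc t' < 2 * t' := by omega
        _ ≤ p * t' := Nat.mul_le_mul_right _ hp.two_le
        _ = t := htt.symm
      obtain ⟨B, hle₂, hinvB, hcardB⟩ := ih t' ht'lt B₁ hinv₁
        (by rw [hcard₁, mul_comm p (Nat.card B₀), mul_assoc]; rw [htt] at hdvd; exact hdvd)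
      exact ⟨B, hle.trans hle₂, hinvB, by rw [hcardB, hcard₁, htt]; ring⟩


end Abelian


open SemidirectProduct Multiplicative

section Gside
variable (n : ℕ)

local notation "G'" => (Multiplicative (ZMod n × ZMod n) ⋊[swapHom n] Multiplicative (ZMod 2))


lemma swapHom_tau (a : Multiplicative (ZMod n × ZMod n)) :
    (swapHom n (ofAdd (1 : ZMod 2))) a = ofAdd (Prod.swap (toAdd a)) := by
  have h1 : (toAdd (ofAdd (1 : ZMod 2))) ≠ 0 := by decide
  simp only [swapHom, MonoidHom.coe_mk, OneHom.coe_mk, if_neg h1]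
  rfl

lemma toAdd_swapHom (t : Multiplicative (ZMod 2)) (a : Multiplicative (ZMod n × ZMod n)) :
    toAdd ((swapHom n t) a) = toAdd a ∨
    toAdd ((swapHom n t) a) = Prod.swap (toAdd a) := by
  by_cases h : toAdd t = 0
  · left
    simp only [swapHom, MonoidHom.coe_mk, OneHom.coe_mk, if_pos h]
    rfl
  · right
    simp only [swapHom, MonoidHom.coe_mk, OneHom.coe_mk, if_neg h]
    rfl

/-- The subgroup of the semidirect product associated to a swap-invariant
subgroup of `(ℤ/nℤ)²`. -/
def toK (B : AddSubgroup (ZMod n × ZMod n)) (hB : ∀ a ∈ B, Prod.swap a ∈ B) :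
    Subgroup G' where
  carrier := {g | toAdd g.left ∈ B}
  one_mem' := B.zero_mem
  mul_mem' := by
    intro g h hg hh
    have : (g * h).left = g.left * (swapHom n g.right) h.left := rfl
    simp only [Set.mem_setOf_eq, this, toAdd_mul]
    rcases toAdd_swapHom n g.right h.left with h1 | h1
    · rw [h1]; exact B.add_mem hg hh
    · rw [h1]; exact B.add_mem hg (hB _ hh)
  inv_mem' := by
    intro g hg
    have : (g⁻¹).left = (swapHom n g.right⁻¹) g.left⁻¹ := rfl
    simp only [Set.mem_setOf_eq, this]
    rcases toAdd_swapHom n g.right⁻¹ g.left⁻¹ with h1 | h1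
    · rw [h1]; exact B.neg_mem hg
    · rw [h1]; exact B.neg_mem (hB _ hg)

/-- The swap-invariant subgroup of `(ℤ/nℤ)²` associated to a subgroup of the
semidirect product. -/
def toB (K : Subgroup G') : AddSubgroup (ZMod n × ZMod n) where
  carrier := {a | SemidirectProduct.inl (ofAdd a) ∈ K}
  zero_mem' := by
    have : (SemidirectProduct.inl (ofAdd (0 : ZMod n × ZMod n)) : G') = 1 := by
      simp
    simp only [Set.mem_setOf_eq, this]
    exact K.one_mem
  add_mem' := by
    intro a b ha hb
    have : (SemidirectProduct.inl (ofAdd (a + b)) : G') =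
        SemidirectProduct.inl (ofAdd a) * SemidirectProduct.inl (ofAdd b) := by
      rw [← map_mul]; rfl
    simp only [Set.mem_setOf_eq, this]
    exact K.mul_mem ha hb
  neg_mem' := by
    intro a ha
    have : (SemidirectProduct.inl (ofAdd (-a)) : G') =
        (SemidirectProduct.inl (ofAdd a) : G')⁻¹ := by
      rw [← map_inv]; rfl
    simp only [Set.mem_setOf_eq, this]
    exact K.inv_mem ha

lemma inr_mem (K : Subgroup G') (hτ : SemidirectProduct.inr (ofAdd (1 : ZMod 2)) ∈ K)
    (t : Multiplicative (ZMod 2)) : SemidirectProduct.inr t ∈ K := by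
  have hkey : t = ofAdd (0 : ZMod 2) ∨ t = ofAdd (1 : ZMod 2) := by
    revert t
    decide
  rcases hkey with rfl | rfl
  · have : (SemidirectProduct.inr (ofAdd (0 : ZMod 2)) : G') = 1 := by simp
    rw [this]; exact K.one_mem
  · exact hτ

lemma inl_left_mem (K : Subgroup G') (hτ : SemidirectProduct.inr (ofAdd (1 : ZMod 2)) ∈ K)
    {g : G'} (hg : g ∈ K) : SemidirectProduct.inl g.left ∈ K := by
  have h2 : SemidirectProduct.inl g.left = g * (SemidirectProduct.inr g.right)⁻¹ :=
    eq_mul_inv_iff_mul_eq.mpr (inl_left_mul_inr_right g)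
  rw [h2]
  exact K.mul_mem hg (K.inv_mem (inr_mem n K hτ g.right))

lemma card_of_tau (K : Subgroup G') (hτ : SemidirectProduct.inr (ofAdd (1 : ZMod 2)) ∈ K) :
    Nat.card K = Nat.card (toB n K) * 2 := by
  have hf : ∀ bk : (toB n K) × Multiplicative (ZMod 2),
      (⟨ofAdd bk.1.1, bk.2⟩ : G') ∈ K := by
    rintro ⟨⟨b, hb⟩, t⟩
    rw [mk_eq_inl_mul_inr]
    exact K.mul_mem hb (inr_mem n K hτ t)
  set f : (toB n K) × Multiplicative (ZMod 2) → K := fun bk => ⟨⟨ofAdd bk.1.1, bk.2⟩, hf bk⟩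
  have hbij : Function.Bijective f := by
    constructor
    · rintro ⟨⟨b, hb⟩, t⟩ ⟨⟨b', hb'⟩, t'⟩ h
      have h0 := congrArg Subtype.val h
      simp only [f] at h0
      have h1 := congrArg SemidirectProduct.left h0
      have h2 := congrArg SemidirectProduct.right h0
      simp only at h1 h2
      have : b = b' := by
        have := congrArg toAdd h1
        simpa using this
      subst this
      subst h2
      rfl
    · rintro ⟨g, hg⟩
      have hb : toAdd g.left ∈ toB n K := by
        show SemidirectProduct.inl (ofAdd (toAdd g.left)) ∈ K
        exact inl_left_mem n K hτ hg
      exact ⟨⟨⟨toAdd g.left, hb⟩, g.right⟩, Subtype.ext (by ext <;> rfl)⟩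
  rw [← Nat.card_eq_of_bijective f hbij, Nat.card_prod]
  congr 1
  rw [Nat.card_congr (toAdd (α := ZMod 2)), Nat.card_zmod]

lemma tau_mem_toK (B : AddSubgroup (ZMod n × ZMod n)) (hB : ∀ a ∈ B, Prod.swap a ∈ B) :
    SemidirectProduct.inr (ofAdd (1 : ZMod 2)) ∈ toK n B hB := by
  show toAdd (SemidirectProduct.inr (ofAdd (1 : ZMod 2)) : G').left ∈ B
  rw [left_inr]
  exact B.zero_mem

lemma toB_toK (B : AddSubgroup (ZMod n × ZMod n)) (hB : ∀ a ∈ B, Prod.swap a ∈ B) :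
    toB n (toK n B hB) = B := by
  ext a
  show toAdd (SemidirectProduct.inl (ofAdd a) : G').left ∈ B ↔ a ∈ B
  rw [left_inl]
  rfl

lemma toB_swap_invariant (K : Subgroup G')
    (hτ : SemidirectProduct.inr (ofAdd (1 : ZMod 2)) ∈ K) :
    ∀ a ∈ toB n K, Prod.swap a ∈ toB n K := by
  intro a ha
  show SemidirectProduct.inl (ofAdd (Prod.swap a)) ∈ K
  have h1 : (SemidirectProduct.inl (ofAdd (Prod.swap a)) : G') =
      SemidirectProduct.inl ((swapHom n (ofAdd (1 : ZMod 2))) (ofAdd a)) := by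
    rw [swapHom_tau]
    rfl
  rw [h1, inl_aut]
  refine K.mul_mem (K.mul_mem hτ ha) ?_
  rw [map_inv]
  exact K.inv_mem hτ

lemma le_toK (H : Subgroup G') (hτ : SemidirectProduct.inr (ofAdd (1 : ZMod 2)) ∈ H)
    (B : AddSubgroup (ZMod n × ZMod n)) (hB : ∀ a ∈ B, Prod.swap a ∈ B)
    (hle : toB n H ≤ B) : H ≤ toK n B hB := by
  intro g hg
  show toAdd g.left ∈ B
  apply hle
  show SemidirectProduct.inl (ofAdd (toAdd g.left)) ∈ H
  exact inl_left_mem n H hτ hg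

/-- The semidirect product is equivalent (as a type) to the product. -/
def prodEquiv : G' ≃ Multiplicative (ZMod n × ZMod n) × Multiplicative (ZMod 2) where
  toFun g := (g.left, g.right)
  invFun p := ⟨p.1, p.2⟩
  left_inv g := by ext <;> rfl
  right_inv p := rfl

lemma card_G [NeZero n] : Nat.card G' = (n * n) * 2 := by
  rw [Nat.card_congr (prodEquiv n), Nat.card_prod,
    Nat.card_congr (toAdd (α := ZMod n × ZMod n)), Nat.card_congr (toAdd (α := ZMod 2)),
    Nat.card_prod, Nat.card_zmod, Nat.card_zmod]

instance finite_G [NeZero n] : Finite G' := Finite.of_equiv _ (prodEquiv n).symm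

end Gside

theorem statement_5 (n : ℕ) (hn : 0 < n)
    (H : Subgroup (Multiplicative (ZMod n × ZMod n) ⋊[swapHom n] Multiplicative (ZMod 2)))
    (hτ : SemidirectProduct.inr (Multiplicative.ofAdd (1 : ZMod 2)) ∈ H) :
    { m : ℕ | ∃ K : Subgroup
        (Multiplicative (ZMod n × ZMod n) ⋊[swapHom n] Multiplicative (ZMod 2)),
        H ≤ K ∧ Nat.card K = m } =
      { m : ℕ | Nat.card H ∣ m ∧
        m ∣ Nat.card (Multiplicative (ZMod n × ZMod n) ⋊[swapHom n] Multiplicative (ZMod 2)) } := by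
  classical
  haveI : NeZero n := ⟨hn.ne'⟩
  ext m
  simp only [Set.mem_setOf_eq]
  constructor
  · rintro ⟨K, hHK, rfl⟩
    exact ⟨Subgroup.card_dvd_of_le hHK, Subgroup.card_subgroup_dvd_card K⟩
  · rintro ⟨⟨s, hs⟩, hmG⟩
    have hcardH : Nat.card H = Nat.card (toB n H) * 2 := card_of_tau n H hτ
    have hcardG : Nat.card (Multiplicative (ZMod n × ZMod n) ⋊[swapHom n]
        Multiplicative (ZMod 2)) = (n * n) * 2 := card_G n
    have hcardA : Nat.card (ZMod n × ZMod n) = n * n := by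
      rw [Nat.card_prod, Nat.card_zmod]
    -- divisibility in the abelian part
    have hdvd : Nat.card (toB n H) * s ∣ Nat.card (ZMod n × ZMod n) := by
      rw [hcardA]
      have h1 : m ∣ (n * n) * 2 := hcardG ▸ hmG
      have h2 : (Nat.card (toB n H) * s) * 2 = m := by
        rw [hs, hcardH]; ring
      have h3 : (Nat.card (toB n H) * s) * 2 ∣ (n * n) * 2 := h2 ▸ h1
      exact (Nat.mul_dvd_mul_iff_right (by norm_num : 0 < 2)).mp h3
    obtain ⟨B, hBle, hBinv, hBcard⟩ := exists_invariant_subgroup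
      (AddEquiv.prodComm : ZMod n × ZMod n ≃+ ZMod n × ZMod n) (fun a => rfl)
      s (toB n H) (toB_swap_invariant n H hτ) hdvd
    have hBswap : ∀ a ∈ B, Prod.swap a ∈ B := hBinv
    refine ⟨toK n B hBswap, le_toK n H hτ B hBswap hBle, ?_⟩
    have h4 := card_of_tau n (toK n B hBswap) (tau_mem_toK n B hBswap)
    rw [h4, toB_toK, hBcard, hs, hcardH]
    ring
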